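/- With μ ∈ ℂ, R a square root of μ² − 1, R ≠ 0, and |μ + R| < 1, the function G_{k,s} defined as the Green function with source at the origin (as in the piecewise formula with (−1/(4R))(μ+R) raised to modified absolute-value exponents) is square-summable over ℤ²: Σ_{k,s ∈ ℤ} |G_{k,s}|² < ∞. -/

import Mathlib

/-- The Green function with source at the origin for the discrete Laplacian. -/
noncomputable def greenFn (μ R : ℂ) (k s : ℤ) : ℂ :=
  if (k = 0 ∧ 0 < s) ∨ (0 < k ∧ s = 0) then
    (-1 / (4 * R)) * (μ + R) ^ (|k + 1| + |s + 1|)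
  else if (k = 0 ∧ s < 0) ∨ (k < 0 ∧ s = 0) then
    (-1 / (4 * R)) * (μ + R) ^ (|k - 1| + |s - 1|)
  else
    (-1 / (4 * R)) * (μ + R) ^ (|k| + |s|)

lemma norm_mul_zpow_le (c z : ℂ) (hz : ‖z‖ ≤ 1) (e : ℤ) (he : 0 ≤ e) (m : ℕ)
    (hm : m ≤ e.toNat) : ‖c * z ^ e‖ ≤ ‖c‖ * ‖z‖ ^ m := by
  rw [norm_mul]
  have h1 : ‖z ^ e‖ ≤ ‖z‖ ^ m := by
    rw [← Int.toNat_of_nonneg he, zpow_natCast, norm_pow]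
    exact pow_le_pow_of_le_one (norm_nonneg z) hz hm
  exact mul_le_mul_of_nonneg_left h1 (norm_nonneg c)

/-- The Green function is square-summable over `ℤ²`. -/
theorem greenFn_square_summable (μ R : ℂ) (hR : R ^ 2 = μ ^ 2 - 1) (hR0 : R ≠ 0)
    (habs : ‖μ + R‖ < 1) :
    Summable (fun p : ℤ × ℤ => ‖greenFn μ R p.1 p.2‖ ^ 2) := by
  set r := ‖μ + R‖ with hrdef
  have hr0 : 0 ≤ r := norm_nonneg _
  set C := ‖(-1 : ℂ) / (4 * R)‖ with hCdef
  have key : ∀ k s : ℤ, ‖greenFn μ R k s‖ ≤ C * r ^ (k.natAbs + s.natAbs) := by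
    intro k s
    unfold greenFn
    split_ifs with h1 h2
    · exact norm_mul_zpow_le _ _ habs.le _ (by
        simp only [Int.abs_eq_natAbs]; omega) _ (by
        simp only [Int.abs_eq_natAbs]; omega)
    · exact norm_mul_zpow_le _ _ habs.le _ (by
        simp only [Int.abs_eq_natAbs]; omega) _ (by
        simp only [Int.abs_eq_natAbs]; omega)
    · exact norm_mul_zpow_le _ _ habs.le _ (by
        simp only [Int.abs_eq_natAbs]; omega) _ (by
        simp only [Int.abs_eq_natAbs]; omega)
  have hq0 : 0 ≤ r ^ 2 := by positivity
  have hq : r ^ 2 < 1 := by nlinarith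
  have hg : Summable (fun k : ℤ => (r ^ 2) ^ k.natAbs) := by
    apply Summable.of_nat_of_neg <;>
      simpa using summable_geometric_of_lt_one hq0 hq
  have hprod : Summable (fun p : ℤ × ℤ =>
      C ^ 2 * ((r ^ 2) ^ p.1.natAbs * (r ^ 2) ^ p.2.natAbs)) := by
    exact (hg.mul_of_nonneg hg (fun k => by positivity) (fun k => by positivity)).mul_left _
  apply Summable.of_nonneg_of_le (fun p => by positivity) _ hprod
  intro p
  calc ‖greenFn μ R p.1 p.2‖ ^ 2 ≤ (C * r ^ (p.1.natAbs + p.2.natAbs)) ^ 2 := by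
        have h := key p.1 p.2
        exact pow_le_pow_left₀ (norm_nonneg _) h 2
    _ = C ^ 2 * ((r ^ 2) ^ p.1.natAbs * (r ^ 2) ^ p.2.natAbs) := by
        rw [mul_pow, ← pow_mul, ← pow_mul, ← pow_mul, ← pow_add]; ring_nf
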